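/- (Theorem 3.1(ii), stationarity of cluster points) Every cluster point x* of {x^k} is a first-order stationary point of F(·, 0): for every index i with x_i* ≠ 0, one has ∇_i f(x*) + λ p |x_i*|^{p−1} sign(x_i*) = 0. -/

import Mathlib

open Filter
open scoped BigOperators InnerProductSpace

noncomputable section

/-- Real n-dimensional Euclidean space. -/
abbrev Vec (n : ℕ) := EuclideanSpace ℝ (Fin n)

/-- The smoothed objective `F(x, ε) = f(x) + λ ∑ᵢ (|xᵢ| + εᵢ)^p`. -/
def Fobj (n : ℕ) (p lam : ℝ) (f : Vec n → ℝ) (z : Vec n) (ε : Fin n → ℝ) : ℝ :=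
  f z + lam * ∑ i, (|z i| + ε i) ^ p

/-- The merit function `ψ(x, y, ε) = F(x, ε) + (β/2)‖x − y‖²`. -/
def psiObj (n : ℕ) (p lam β : ℝ) (f : Vec n → ℝ) (z y : Vec n) (ε : Fin n → ℝ) : ℝ :=
  Fobj n p lam f z ε + β / 2 * ‖z - y‖ ^ 2

/-- The weighted-ℓ₁ subproblem objective at iteration `k`:
`⟨∇f(yₖ), z⟩ + (β/2)‖z − yₖ‖² + λ ∑ᵢ wᵢᵏ |zᵢ|` with `wᵢᵏ = p(|xᵢᵏ| + εᵢᵏ)^{p−1}`. -/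
def subObj (n : ℕ) (p lam β : ℝ) (f : Vec n → ℝ) (xk yk : Vec n) (εk : Fin n → ℝ)
    (z : Vec n) : ℝ :=
  ⟪gradient f yk, z⟫_ℝ + β / 2 * ‖z - yk‖ ^ 2
    + lam * ∑ i, (p * (|xk i| + εk i) ^ (p - 1)) * |z i|

/-- All the hypotheses of the EIRL1 algorithm (Algorithm 1) together with
Assumption 2.1.  The convention `x⁻¹ = x⁰` is encoded through truncated
subtraction on ℕ (`x (k-1) = x 0` for `k = 0`). -/
structure EIRL1 (n : ℕ) (p lam β Lf μ αbar : ℝ) (f : Vec n → ℝ)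
    (x y : ℕ → Vec n) (ε : ℕ → Fin n → ℝ) (α : ℕ → ℝ) : Prop where
  hn : 1 ≤ n
  hp0 : 0 < p
  hp1 : p < 1
  hlam : 0 < lam
  hμ0 : 0 < μ
  hμ1 : μ < 1
  hLf : 0 ≤ Lf
  hβ : Lf < β
  hconv : ConvexOn ℝ Set.univ f
  hdiff : ContDiff ℝ 1 f
  hlip : ∀ a b, ‖gradient f a - gradient f b‖ ≤ Lf * ‖a - b‖
  hαbar0 : 0 ≤ αbar
  hαbar1 : αbar < 1
  hα0 : ∀ k, 0 ≤ α k
  hα1 : ∀ k, α k ≤ αbar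
  hε0 : ∀ i, 0 < ε 0 i
  hεpos : ∀ k i, 0 < ε (k + 1) i
  hεdec : ∀ k i, ε (k + 1) i ≤ μ * ε k i
  hy : ∀ k, y k = x k + α k • (x k - x (k - 1))
  hmin : ∀ k z, z ≠ x (k + 1) →
    subObj n p lam β f (x k) (y k) (ε k) (x (k + 1)) < subObj n p lam β f (x k) (y k) (ε k) z
  hlevel : Bornology.IsBounded {z : Vec n | Fobj n p lam f z 0 ≤ Fobj n p lam f (x 0) (ε 0)}

namespace EIRL1Aux

/-! ### Auxiliary lemmas -/

lemma line_hasDerivAt {n : ℕ} {f : Vec n → ℝ} (hdiff : ContDiff ℝ 1 f) (a v : Vec n) (t : ℝ) :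
    HasDerivAt (fun s : ℝ => f (a + s • v)) ⟪gradient f (a + t • v), v⟫_ℝ t := by
  have hc : HasDerivAt (fun s : ℝ => a + s • v) v t := by
    simpa using ((hasDerivAt_id t).smul_const v).const_add a
  have hf : HasGradientAt f (gradient f (a + t • v)) (a + t • v) :=
    ((hdiff.differentiable one_ne_zero) (a + t • v)).hasGradientAt
  have hF : HasFDerivAt f (InnerProductSpace.toDual ℝ (Vec n) (gradient f (a + t • v)))
      (a + t • v) := by
    rwa [hasGradientAt_iff_hasFDerivAt] at hf
  have := hF.comp_hasDerivAt t hc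
  rw [InnerProductSpace.toDual_apply_apply] at this; exact this

lemma rpow_tangent {p a b : ℝ} (hp0 : 0 < p) (hp1 : p < 1) (ha : 0 < a) (hb : 0 ≤ b) :
    b ^ p ≤ a ^ p + p * a ^ (p - 1) * (b - a) := by
  have hconc : ConcaveOn ℝ (Set.Ici 0) fun x : ℝ => x ^ p :=
    Real.concaveOn_rpow hp0.le hp1.le
  have hd : HasDerivAt (fun x : ℝ => x ^ p) (p * a ^ (p - 1)) a := by
    simpa [mul_comm] using Real.hasDerivAt_rpow_const (p := p) (Or.inl ha.ne')
  rcases lt_trichotomy b a with h | h | h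
  · have := hconc.le_slope_of_hasDerivAt (Set.mem_Ici.2 hb) (Set.mem_Ici.2 ha.le) h hd
    rw [slope_def_field] at this
    have h' : (0:ℝ) < a - b := by linarith
    rw [le_div_iff₀ h'] at this
    nlinarith [this]
  · simp [h]
  · have := hconc.slope_le_of_hasDerivAt (Set.mem_Ici.2 ha.le) (Set.mem_Ici.2 hb) h hd
    rw [slope_def_field] at this
    have h' : (0:ℝ) < b - a := by linarith
    rw [div_le_iff₀ h'] at this
    nlinarith [this]

lemma convex_grad_ineq {n : ℕ} {f : Vec n → ℝ} (hconv : ConvexOn ℝ Set.univ f)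
    (hdiff : ContDiff ℝ 1 f) (a b : Vec n) :
    f a + ⟪gradient f a, b - a⟫_ℝ ≤ f b := by
  set g : ℝ → ℝ := fun s => f (a + s • (b - a)) with hg
  have hgc : ConvexOn ℝ Set.univ g := by
    have : g = f ∘ (AffineMap.lineMap a b : ℝ →ᵃ[ℝ] Vec n) := by
      funext s
      have : (1 - s) • a + s • b = a + s • (b - a) := by module
      simp [hg, AffineMap.lineMap_apply_module, this]
    rw [this]
    simpa using hconv.comp_affineMap (AffineMap.lineMap a b)
  have hd : HasDerivAt g ⟪gradient f a, b - a⟫_ℝ 0 := by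
    simpa using line_hasDerivAt hdiff a (b - a) 0
  have := hgc.le_slope_of_hasDerivAt (Set.mem_univ 0) (Set.mem_univ 1) one_pos hd
  rw [slope_def_field] at this
  have e1 : a + (1:ℝ) • (b - a) = b := by module
  have e0 : a + (0:ℝ) • (b - a) = a := by module
  simp only [hg, e1, e0, sub_zero, div_one] at this
  linarith [this]

lemma descent_lemma {n : ℕ} {f : Vec n → ℝ} {Lf : ℝ} (hdiff : ContDiff ℝ 1 f)
    (hlip : ∀ a b, ‖gradient f a - gradient f b‖ ≤ Lf * ‖a - b‖) (a b : Vec n) :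
    f b ≤ f a + ⟪gradient f a, b - a⟫_ℝ + Lf / 2 * ‖b - a‖ ^ 2 := by
  set v := b - a with hv
  set h : ℝ → ℝ := fun t => f (a + t • v) - t * ⟪gradient f a, v⟫_ℝ - Lf / 2 * t ^ 2 * ‖v‖ ^ 2
    with hh
  have hderiv : ∀ t : ℝ, HasDerivAt h
      (⟪gradient f (a + t • v), v⟫_ℝ - ⟪gradient f a, v⟫_ℝ - Lf * t * ‖v‖ ^ 2) t := by
    intro t
    have h1 := line_hasDerivAt hdiff a v t
    have h2 : HasDerivAt (fun t : ℝ => t * ⟪gradient f a, v⟫_ℝ) ⟪gradient f a, v⟫_ℝ t := by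
      simpa using (hasDerivAt_id t).mul_const ⟪gradient f a, v⟫_ℝ
    have h3 : HasDerivAt (fun t : ℝ => Lf / 2 * t ^ 2 * ‖v‖ ^ 2) (Lf * t * ‖v‖ ^ 2) t := by
      have := ((hasDerivAt_pow 2 t).const_mul (Lf / 2)).mul_const (‖v‖ ^ 2)
      exact this.congr_deriv (by rw [show (2:ℕ) - 1 = 1 from rfl, pow_one]; push_cast; ring)
    exact (h1.sub h2).sub h3
  have hnonpos : ∀ t ∈ Set.Ioo (0:ℝ) 1, deriv h t ≤ 0 := by
    intro t ht
    rw [(hderiv t).deriv]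
    have hcs : ⟪gradient f (a + t • v) - gradient f a, v⟫_ℝ ≤
        ‖gradient f (a + t • v) - gradient f a‖ * ‖v‖ := real_inner_le_norm _ _
    have hl := hlip (a + t • v) a
    have : ‖a + t • v - a‖ = t * ‖v‖ := by
      simp [norm_smul, abs_of_nonneg ht.1.le]
    rw [this] at hl
    have h0 : (0:ℝ) ≤ ‖v‖ := norm_nonneg _
    rw [inner_sub_left] at hcs
    nlinarith [hcs, mul_le_mul_of_nonneg_right hl h0,
      real_inner_le_norm (gradient f (a + t • v) - gradient f a) v]
  have hcont : ContinuousOn h (Set.Icc 0 1) := fun t _ =>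
    ((hderiv t).differentiableAt).continuousAt.continuousWithinAt
  have hdiffOn : DifferentiableOn ℝ h (interior (Set.Icc (0:ℝ) 1)) := fun t _ =>
    ((hderiv t).differentiableAt).differentiableWithinAt
  have hanti : AntitoneOn h (Set.Icc 0 1) := by
    apply antitoneOn_of_deriv_nonpos (convex_Icc 0 1) hcont hdiffOn
    intro t ht
    rw [interior_Icc] at ht
    exact hnonpos t ht
  have key := hanti (Set.mem_Icc.2 ⟨le_refl 0, zero_le_one⟩)
    (Set.mem_Icc.2 ⟨zero_le_one, le_refl 1⟩) zero_le_one
  have e1 : a + (1:ℝ) • v = b := by rw [hv]; module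
  have e0 : a + (0:ℝ) • v = a := by module
  simp only [hh, e1, e0, one_pow, mul_one, one_mul, zero_pow, mul_zero, zero_mul, sub_zero] at key
  linarith [key]

lemma norm_combo_sq {n : ℕ} (a b y : Vec n) (t : ℝ) :
    ‖(t • a + (1 - t) • b) - y‖ ^ 2
      = t * ‖a - y‖ ^ 2 + (1 - t) * ‖b - y‖ ^ 2 - t * (1 - t) * ‖a - b‖ ^ 2 := by
  have hv : (t • a + (1 - t) • b) - y = t • (a - y) + (1 - t) • (b - y) := by module
  have hab : a - b = (a - y) - (b - y) := by module
  rw [hv, hab]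
  set u := a - y
  set v := b - y
  rw [← real_inner_self_eq_norm_sq, ← real_inner_self_eq_norm_sq,
    ← real_inner_self_eq_norm_sq, ← real_inner_self_eq_norm_sq]
  simp only [inner_add_add_self, inner_sub_sub_self, real_inner_smul_left, real_inner_smul_right]
  ring

section sub
variable {n : ℕ} {p lam β : ℝ} {f : Vec n → ℝ} {xk yk : Vec n} {εk : Fin n → ℝ}

lemma w_nonneg (hp : 0 < p) (hεk : ∀ i, 0 < εk i) (i : Fin n) :
    0 ≤ p * (|xk i| + εk i) ^ (p - 1) := by
  have h1 : (0:ℝ) ≤ |xk i| + εk i := add_nonneg (abs_nonneg _) (hεk i).le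
  exact mul_nonneg hp.le (Real.rpow_nonneg h1 _)

lemma subObj_combo (hlam : 0 < lam) (hp : 0 < p) (hεk : ∀ i, 0 < εk i)
    (z₁ z₂ : Vec n) {t : ℝ} (ht0 : 0 ≤ t) (ht1 : t ≤ 1) :
    subObj n p lam β f xk yk εk (t • z₁ + (1 - t) • z₂)
      ≤ t * subObj n p lam β f xk yk εk z₁ + (1 - t) * subObj n p lam β f xk yk εk z₂
        - β / 2 * (t * (1 - t) * ‖z₁ - z₂‖ ^ 2) := by
  have hinner : ⟪gradient f yk, t • z₁ + (1 - t) • z₂⟫_ℝ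
      = t * ⟪gradient f yk, z₁⟫_ℝ + (1 - t) * ⟪gradient f yk, z₂⟫_ℝ := by
    rw [inner_add_right, real_inner_smul_right, real_inner_smul_right]
  have hsum : ∑ i, (p * (|xk i| + εk i) ^ (p - 1)) * |(t • z₁ + (1 - t) • z₂) i|
      ≤ t * ∑ i, (p * (|xk i| + εk i) ^ (p - 1)) * |z₁ i|
        + (1 - t) * ∑ i, (p * (|xk i| + εk i) ^ (p - 1)) * |z₂ i| := by
    rw [Finset.mul_sum, Finset.mul_sum, ← Finset.sum_add_distrib]
    apply Finset.sum_le_sum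
    intro i _
    have happ : (t • z₁ + (1 - t) • z₂) i = t * z₁ i + (1 - t) * z₂ i := rfl
    have habs : |(t • z₁ + (1 - t) • z₂) i| ≤ t * |z₁ i| + (1 - t) * |z₂ i| := by
      rw [happ]
      calc |t * z₁ i + (1 - t) * z₂ i| ≤ |t * z₁ i| + |(1 - t) * z₂ i| := abs_add_le _ _
        _ = t * |z₁ i| + (1 - t) * |z₂ i| := by
            rw [abs_mul, abs_mul, abs_of_nonneg ht0, abs_of_nonneg (show (0:ℝ) ≤ 1 - t by linarith)]
    have hw := w_nonneg (xk := xk) hp hεk i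
    nlinarith [habs, hw]
  have hnorm := norm_combo_sq z₁ z₂ yk t
  simp only [subObj]
  have hlam' : (0:ℝ) ≤ lam := hlam.le
  have hs' := mul_le_mul_of_nonneg_left hsum hlam'
  rw [hinner, hnorm]
  nlinarith [hs']

lemma strong_min (hlam : 0 < lam) (hβ : 0 < β) (hp : 0 < p) (hεk : ∀ i, 0 < εk i)
    {xs : Vec n} (hmin : ∀ z, subObj n p lam β f xk yk εk xs ≤ subObj n p lam β f xk yk εk z)
    (z : Vec n) :
    subObj n p lam β f xk yk εk xs + β / 2 * ‖z - xs‖ ^ 2 ≤ subObj n p lam β f xk yk εk z := by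
  by_cases hz : z = xs
  · simp [hz]
  have hc : (0:ℝ) < β / 2 * ‖z - xs‖ ^ 2 := by
    have : z - xs ≠ 0 := sub_ne_zero_of_ne hz
    have h1 : (0:ℝ) < ‖z - xs‖ := norm_pos_iff.2 this
    positivity
  set A := subObj n p lam β f xk yk εk xs with hA
  set B := subObj n p lam β f xk yk εk z with hB
  set c := β / 2 * ‖z - xs‖ ^ 2 with hcdef
  apply le_of_forall_pos_le_add
  intro η hη
  set t := min 1 (η / c) with htdef
  have ht0 : 0 < t := lt_min one_pos (div_pos hη hc)
  have ht1 : t ≤ 1 := min_le_left _ _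
  have htc : t * c ≤ η := by
    have : t ≤ η / c := min_le_right _ _
    calc t * c ≤ (η / c) * c := by nlinarith
      _ = η := div_mul_cancel₀ _ hc.ne'
  have hcombo := subObj_combo (β := β) (f := f) (yk := yk) (xk := xk) hlam hp hεk z xs ht0.le ht1
  have hmle := hmin (t • z + (1 - t) • xs)
  rw [← hB] at hcombo
  have key : t * A ≤ t * B - t * (1 - t) * c := by
    have := hmle.trans hcombo
    rw [hcdef]; nlinarith [this]
  have key' : t * A ≤ t * (B - (1 - t) * c) := by nlinarith [key]
  have hAB : A ≤ B - (1 - t) * c := (mul_le_mul_iff_right₀ ht0).mp key'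
  nlinarith [hAB, htc]

lemma kkt_coord (hβ : 0 < β)
    {xs : Vec n} (hmin : ∀ z, subObj n p lam β f xk yk εk xs ≤ subObj n p lam β f xk yk εk z)
    (i : Fin n) (hxi : xs i ≠ 0) :
    gradient f yk i + β * (xs i - yk i)
      + lam * (p * (|xk i| + εk i) ^ (p - 1)) * Real.sign (xs i) = 0 := by
  set w : Fin n → ℝ := fun j => p * (|xk j| + εk j) ^ (p - 1) with hw
  set g := gradient f yk with hg
  set c := g i + β * (xs i - yk i) + lam * w i * Real.sign (xs i) with hcdef
  set e : Vec n := EuclideanSpace.single i (1:ℝ) with he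
  have habsxs : 0 < |xs i| := abs_pos.2 hxi
  have key : ∀ t : ℝ, |t| < |xs i| → 0 ≤ t * c + β / 2 * t ^ 2 := by
    intro t ht
    have habs : |xs i + t| = |xs i| + t * Real.sign (xs i) := by
      rcases lt_trichotomy (xs i) 0 with h | h | h
      · have h2 := abs_lt.mp ht
        have h3 : |xs i| = -(xs i) := abs_of_neg h
        have h1 : xs i + t < 0 := by rw [h3] at h2; linarith [h2.2]
        rw [Real.sign_of_neg h, abs_of_neg h1, h3]; ring
      · exact absurd h hxi
      · have h2 := abs_lt.mp ht
        have h3 : |xs i| = xs i := abs_of_pos h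
        have h1 : 0 < xs i + t := by rw [h3] at h2; linarith [h2.1]
        rw [Real.sign_of_pos h, abs_of_pos h1, h3]; ring
    have hinner : ⟪g, xs + t • e⟫_ℝ = ⟪g, xs⟫_ℝ + t * g i := by
      rw [inner_add_right, real_inner_smul_right, he]
      norm_num [EuclideanSpace.inner_single_right]
    have hvec : xs + t • e - yk = (xs - yk) + t • e := by module
    have hnorm : ‖xs + t • e - yk‖ ^ 2 = ‖xs - yk‖ ^ 2 + 2 * (t * (xs i - yk i)) + t ^ 2 := by
      rw [hvec, norm_add_sq_real]
      have h1 : ⟪xs - yk, t • e⟫_ℝ = t * (xs i - yk i) := by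
        rw [real_inner_smul_right, he]
        norm_num [EuclideanSpace.inner_single_right]
      have h2 : ‖t • e‖ ^ 2 = t ^ 2 := by
        rw [norm_smul, he]
        simp [EuclideanSpace.norm_single, Real.norm_eq_abs, mul_pow, sq_abs]
      rw [h1, h2]
    have hsum : ∑ j, w j * |(xs + t • e) j|
        = (∑ j, w j * |xs j|) + w i * (|xs i + t| - |xs i|) := by
      have hterm : ∀ j : Fin n, w j * |(xs + t • e) j|
          = w j * |xs j| + (if j = i then w i * (|xs i + t| - |xs i|) else 0) := by
        intro j
        have happ : (xs + t • e) j = xs j + t * (if j = i then (1:ℝ) else 0) := by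
          have : e j = if j = i then (1:ℝ) else 0 := by
            rw [he]; exact EuclideanSpace.single_apply i 1 j
          simp [this]
        by_cases hj : j = i
        · subst hj; simp [happ]; ring
        · simp [happ, hj]
      rw [Finset.sum_congr rfl fun j _ => hterm j, Finset.sum_add_distrib]
      congr 1
      simp
    have hexp : subObj n p lam β f xk yk εk (xs + t • e)
        = subObj n p lam β f xk yk εk xs + t * c + β / 2 * t ^ 2 := by
      simp only [subObj, ← hg, ← hw]
      rw [hinner, hnorm, hsum, habs, hcdef]
      ring
    have := hmin (xs + t • e)
    rw [hexp] at this
    linarith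
  by_contra hc0
  rcases lt_or_gt_of_ne hc0 with hneg | hpos
  · set δ := min (|xs i| / 2) (-c / β) with hδ
    have hδ0 : 0 < δ := lt_min (by linarith) (div_pos (by linarith) hβ)
    have hδ1 : |δ| < |xs i| := by
      rw [abs_of_pos hδ0]
      calc δ ≤ |xs i| / 2 := min_le_left _ _
        _ < |xs i| := by linarith
    have hk := key δ hδ1
    have hδ2 : δ ≤ -c / β := min_le_right _ _
    have : β * δ ≤ -c := by
      rw [le_div_iff₀ hβ] at hδ2; linarith [hδ2]
    nlinarith [hk, hδ0, this]
  · set δ := min (|xs i| / 2) (c / β) with hδ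
    have hδ0 : 0 < δ := lt_min (by linarith) (div_pos (by linarith) hβ)
    have hδ1 : |(-δ)| < |xs i| := by
      rw [abs_neg, abs_of_pos hδ0]
      calc δ ≤ |xs i| / 2 := min_le_left _ _
        _ < |xs i| := by linarith
    have hk := key (-δ) hδ1
    have hδ2 : δ ≤ c / β := min_le_right _ _
    have : β * δ ≤ c := by
      rw [le_div_iff₀ hβ] at hδ2; linarith [hδ2]
    nlinarith [hk, hδ0, this]

end sub

section main
variable {n : ℕ} {p lam β Lf μ αbar : ℝ} {f : Vec n → ℝ}
  {x y : ℕ → Vec n} {ε : ℕ → Fin n → ℝ} {α : ℕ → ℝ}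

lemma εpos (H : EIRL1 n p lam β Lf μ αbar f x y ε α) : ∀ k i, 0 < ε k i := by
  intro k i
  cases k with
  | zero => exact H.hε0 i
  | succ m => exact H.hεpos m i

lemma hmin' (H : EIRL1 n p lam β Lf μ αbar f x y ε α) (k : ℕ) :
    ∀ z, subObj n p lam β f (x k) (y k) (ε k) (x (k + 1))
      ≤ subObj n p lam β f (x k) (y k) (ε k) z := by
  intro z
  by_cases h : z = x (k + 1)
  · simp [h]
  · exact (H.hmin k z h).le

lemma decrease (H : EIRL1 n p lam β Lf μ αbar f x y ε α) (k : ℕ) :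
    Fobj n p lam f (x (k+1)) (ε (k+1)) + β / 2 * ‖x (k+1) - x k‖ ^ 2
      ≤ Fobj n p lam f (x k) (ε k) + β / 2 * ((α k) ^ 2 * ‖x k - x (k-1)‖ ^ 2) := by
  have hβ0 : 0 < β := H.hLf.trans_lt H.hβ
  have hεk := fun i => εpos H k i
  have SA := strong_min (f := f) (xk := x k) (yk := y k) (εk := ε k)
    H.hlam hβ0 H.hp0 hεk (hmin' H k) (x k)
  have SB := descent_lemma H.hdiff H.hlip (y k) (x (k+1))
  have SC := convex_grad_ineq H.hconv H.hdiff (y k) (x k)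
  -- concavity step
  have SD : ∑ i, (|x (k+1) i| + ε (k+1) i) ^ p
      ≤ ∑ i, (|x k i| + ε k i) ^ p
        + ((∑ i, (p * (|x k i| + ε k i) ^ (p - 1)) * |x (k+1) i|)
          - ∑ i, (p * (|x k i| + ε k i) ^ (p - 1)) * |x k i|) := by
    rw [← Finset.sum_sub_distrib, ← Finset.sum_add_distrib]
    apply Finset.sum_le_sum
    intro i _
    have ha : (0:ℝ) < |x k i| + ε k i := add_pos_of_nonneg_of_pos (abs_nonneg _) (hεk i)
    have hb : (0:ℝ) ≤ |x (k+1) i| + ε (k+1) i :=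
      add_nonneg (abs_nonneg _) (εpos H (k+1) i).le
    have htan := rpow_tangent H.hp0 H.hp1 ha hb
    have hεle : ε (k+1) i ≤ ε k i :=
      (H.hεdec k i).trans (mul_le_of_le_one_left (εpos H k i).le H.hμ1.le)
    have hwn : 0 ≤ p * (|x k i| + ε k i) ^ (p - 1) :=
      mul_nonneg H.hp0.le (Real.rpow_nonneg ha.le _)
    nlinarith [htan, mul_le_mul_of_nonneg_left (sub_nonneg.2 hεle) hwn]
  -- inner product rewriting
  set g := gradient f (y k) with hg
  have hIB : ⟪g, x (k+1) - y k⟫_ℝ = ⟪g, x (k+1)⟫_ℝ - ⟪g, y k⟫_ℝ := inner_sub_right _ _ _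
  have hIC : ⟪g, x k - y k⟫_ℝ = ⟪g, x k⟫_ℝ - ⟪g, y k⟫_ℝ := inner_sub_right _ _ _
  -- ‖x k - y k‖ = α k * ‖x k - x (k-1)‖
  have hB : ‖x k - y k‖ ^ 2 = (α k) ^ 2 * ‖x k - x (k-1)‖ ^ 2 := by
    have : x k - y k = -(α k • (x k - x (k-1))) := by rw [H.hy k]; module
    rw [this, norm_neg, norm_smul, Real.norm_eq_abs, abs_of_nonneg (H.hα0 k), mul_pow]
  have hD : ‖x k - x (k+1)‖ = ‖x (k+1) - x k‖ := norm_sub_rev _ _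
  -- expand SA
  rw [subObj, subObj, ← hg, hD, hB] at SA
  rw [hIB] at SB
  rw [hIC] at SC
  simp only [Fobj]
  have hLfA : Lf / 2 * ‖x (k+1) - y k‖ ^ 2 ≤ β / 2 * ‖x (k+1) - y k‖ ^ 2 := by
    nlinarith [sq_nonneg ‖x (k+1) - y k‖, H.hβ]
  have SD' := mul_le_mul_of_nonneg_left SD H.hlam.le
  nlinarith [SA, SB, SC, SD', hLfA]

end main
end EIRL1Aux

open Topology in
set_option maxHeartbeats 1000000 in
theorem stmt_12 (n : ℕ) (p lam β Lf μ αbar : ℝ) (f : Vec n → ℝ)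
    (x y : ℕ → Vec n) (ε : ℕ → Fin n → ℝ) (α : ℕ → ℝ)
    (H : EIRL1 n p lam β Lf μ αbar f x y ε α) :
    ∀ xstar : Vec n, MapClusterPt xstar atTop x →
      ∀ i, xstar i ≠ 0 →
        gradient f xstar i + lam * p * |xstar i| ^ (p - 1) * Real.sign (xstar i) = 0 := by
  open EIRL1Aux in
  have hβ0 : 0 < β := H.hLf.trans_lt H.hβ
  obtain ⟨D, hDdef⟩ : ∃ D : ℕ → ℝ, D = fun k => ‖x k - x (k - 1)‖ := ⟨_, rfl⟩
  obtain ⟨F, hFdef⟩ : ∃ F : ℕ → ℝ, F = fun k => Fobj n p lam f (x k) (ε k) := ⟨_, rfl⟩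
  obtain ⟨S, hSdef⟩ : ∃ S : ℕ → ℝ, S = fun k => F k + β / 2 * D k ^ 2 := ⟨_, rfl⟩
  have hDsucc : ∀ k, D (k + 1) = ‖x (k + 1) - x k‖ := by
    intro k; simp [hDdef]
  have hDnn : ∀ k, 0 ≤ D k := by
    intro k; rw [hDdef]; exact norm_nonneg _
  have hc : (0:ℝ) < β / 2 * (1 - αbar ^ 2) := by
    have : αbar ^ 2 < 1 := by nlinarith [H.hαbar0, H.hαbar1]
    nlinarith [hβ0]
  have hdec : ∀ k, S (k + 1) ≤ S k - β / 2 * (1 - αbar ^ 2) * D k ^ 2 := by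
    intro k
    have h := EIRL1Aux.decrease H k
    have hα2 : (α k) ^ 2 ≤ αbar ^ 2 := by
      have := H.hα0 k; have := H.hα1 k; nlinarith
    have hD2 : (0:ℝ) ≤ D k ^ 2 := sq_nonneg _
    have e1 : S (k+1) = Fobj n p lam f (x (k+1)) (ε (k+1)) + β / 2 * ‖x (k+1) - x k‖ ^ 2 := by
      simp only [hSdef, hFdef]; rw [hDsucc k]
    have e2 : S k = Fobj n p lam f (x k) (ε k) + β / 2 * ‖x k - x (k-1)‖ ^ 2 := by
      simp only [hSdef, hFdef, hDdef]
    have e3 : D k = ‖x k - x (k-1)‖ := by simp only [hDdef]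
    rw [e1, e2, e3]
    nlinarith [h, mul_le_mul_of_nonneg_right hα2 (sq_nonneg ‖x k - x (k-1)‖)]
  have hSsucc : ∀ k, S (k + 1) ≤ S k := by
    intro k
    have := hdec k
    nlinarith [mul_nonneg hc.le (sq_nonneg (D k))]
  have hSanti : Antitone S := antitone_nat_of_succ_le hSsucc
  have hD0 : D 0 = 0 := by simp [hDdef]
  have hS0 : S 0 = F 0 := by rw [hSdef]; simp [hD0]
  -- monotonicity of Fobj in ε
  have hFmono : ∀ k, Fobj n p lam f (x k) 0 ≤ F k := by
    intro k
    simp only [hFdef, Fobj]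
    have : ∑ i, (|x k i| + (0 : Fin n → ℝ) i) ^ p ≤ ∑ i, (|x k i| + ε k i) ^ p := by
      apply Finset.sum_le_sum
      intro i _
      apply Real.rpow_le_rpow (by simp [abs_nonneg]) _ H.hp0.le
      simp [Pi.zero_apply]
      exact (εpos H k i).le
    nlinarith [mul_le_mul_of_nonneg_left this H.hlam.le]
  have hFleS : ∀ k, F k ≤ S k := by
    intro k; simp only [hSdef]; nlinarith [sq_nonneg (D k), hβ0]
  -- all iterates lie in the level set
  set L := {z : Vec n | Fobj n p lam f z 0 ≤ Fobj n p lam f (x 0) (ε 0)} with hLdef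
  have hxL : ∀ k, x k ∈ L := by
    intro k
    have h1 : Fobj n p lam f (x k) 0 ≤ F k := hFmono k
    have h2 : F k ≤ S k := hFleS k
    have h3 : S k ≤ S 0 := hSanti (Nat.zero_le k)
    rw [hS0] at h3
    exact Set.mem_setOf.2 (by simp only [hFdef] at *; linarith)
  -- lower bound for f on the closure of the level set
  have hcompact : IsCompact (closure L) :=
    Metric.isCompact_of_isClosed_isBounded isClosed_closure H.hlevel.closure
  obtain ⟨z₀, hz₀mem, hz₀⟩ := hcompact.exists_isMinOn
    ⟨x 0, subset_closure (hxL 0)⟩ (H.hdiff.continuous.continuousOn)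
  have hfm : ∀ k, f z₀ ≤ f (x k) := fun k => hz₀ (subset_closure (hxL k))
  have hFm : ∀ k, f z₀ ≤ F k := by
    intro k
    simp only [hFdef, Fobj]
    have hsumnn : (0:ℝ) ≤ ∑ i, (|x k i| + ε k i) ^ p := by
      apply Finset.sum_nonneg
      intro i _
      exact Real.rpow_nonneg (add_nonneg (abs_nonneg _) (εpos H k i).le) _
    nlinarith [hfm k, mul_nonneg H.hlam.le hsumnn]
  -- summability of the squared differences
  have hpartial : ∀ N : ℕ, ∑ k ∈ Finset.range N, β / 2 * (1 - αbar ^ 2) * D k ^ 2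
      ≤ F 0 - f z₀ := by
    intro N
    have h1 : ∑ k ∈ Finset.range N, β / 2 * (1 - αbar ^ 2) * D k ^ 2
        ≤ ∑ k ∈ Finset.range N, (S k - S (k + 1)) := by
      apply Finset.sum_le_sum
      intro k _
      have := hdec k; linarith
    have h2 : ∑ k ∈ Finset.range N, (S k - S (k + 1)) = S 0 - S N :=
      Finset.sum_range_sub' S N
    have h3 : f z₀ ≤ S N := (hFm N).trans (hFleS N)
    rw [h2, hS0] at h1
    linarith
  have hsummable : Summable (fun k => β / 2 * (1 - αbar ^ 2) * D k ^ 2) :=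
    summable_of_sum_range_le (fun k => mul_nonneg hc.le (sq_nonneg _)) hpartial
  have htend0 := hsummable.tendsto_atTop_zero
  have hD2tend : Tendsto (fun k => D k ^ 2) atTop (𝓝 0) := by
    have h := htend0.const_mul (1 / (β / 2 * (1 - αbar ^ 2)))
    rw [mul_zero] at h
    refine h.congr fun k => ?_
    rw [← mul_assoc, one_div_mul_cancel hc.ne', one_mul]
  have hDtend : Tendsto D atTop (𝓝 0) := by
    have h := (Real.continuous_sqrt.tendsto 0).comp hD2tend
    simp only [Function.comp_def, Real.sqrt_zero] at h
    refine h.congr fun k => ?_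
    exact Real.sqrt_sq (hDnn k)
  -- extract subsequence converging to the cluster point
  intro xstar hclus i hxi
  have hfreq : ∀ m : ℕ, ∃ᶠ k in atTop, dist (x k) xstar < 1 / (m + 1) := by
    intro m
    have hball : Metric.ball xstar (1 / (m + 1)) ∈ 𝓝 xstar :=
      Metric.ball_mem_nhds _ (by positivity)
    have := (mapClusterPt_iff_frequently.mp hclus) _ hball
    simpa [Metric.mem_ball, dist_comm] using this
  obtain ⟨φ, hφmono, hφ⟩ := Filter.extraction_forall_of_frequently hfreq
  have hφtop : Tendsto φ atTop atTop := hφmono.tendsto_atTop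
  have hxφ : Tendsto (fun m => x (φ m)) atTop (𝓝 xstar) := by
    rw [tendsto_iff_dist_tendsto_zero]
    apply squeeze_zero (fun m => dist_nonneg) (fun m => (hφ m).le)
    exact tendsto_one_div_add_atTop_nhds_zero_nat
  have hDφ : Tendsto (fun m => ‖x (φ m + 1) - x (φ m)‖) atTop (𝓝 0) := by
    have h1 : Tendsto (fun m => φ m + 1) atTop atTop :=
      (tendsto_add_atTop_nat 1).comp hφtop
    have h := hDtend.comp h1
    refine h.congr fun m => ?_
    simp [hDdef]
  have hx1φ : Tendsto (fun m => x (φ m + 1)) atTop (𝓝 xstar) := by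
    rw [tendsto_iff_dist_tendsto_zero]
    apply squeeze_zero (fun m => dist_nonneg)
      (g := fun m => ‖x (φ m + 1) - x (φ m)‖ + dist (x (φ m)) xstar)
    · intro m
      calc dist (x (φ m + 1)) xstar ≤ dist (x (φ m + 1)) (x (φ m)) + dist (x (φ m)) xstar :=
            dist_triangle _ _ _
        _ = ‖x (φ m + 1) - x (φ m)‖ + dist (x (φ m)) xstar := by rw [dist_eq_norm]
    · have h2 : Tendsto (fun m => dist (x (φ m)) xstar) atTop (𝓝 0) := by
        rw [← tendsto_iff_dist_tendsto_zero] at *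
        exact hxφ
      simpa using hDφ.add h2
  have hyφ : Tendsto (fun m => y (φ m)) atTop (𝓝 xstar) := by
    rw [tendsto_iff_dist_tendsto_zero]
    apply squeeze_zero (fun m => dist_nonneg)
      (g := fun m => αbar * D (φ m) + dist (x (φ m)) xstar)
    · intro m
      have h1 : dist (y (φ m)) (x (φ m)) = α (φ m) * D (φ m) := by
        simp only [hDdef]
        rw [dist_eq_norm, H.hy (φ m)]
        have : x (φ m) + α (φ m) • (x (φ m) - x (φ m - 1)) - x (φ m)
            = α (φ m) • (x (φ m) - x (φ m - 1)) := by module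
        rw [this, norm_smul, Real.norm_eq_abs, abs_of_nonneg (H.hα0 _)]
      have h2 : α (φ m) * D (φ m) ≤ αbar * D (φ m) :=
        mul_le_mul_of_nonneg_right (H.hα1 _) (hDnn _)
      calc dist (y (φ m)) xstar ≤ dist (y (φ m)) (x (φ m)) + dist (x (φ m)) xstar :=
            dist_triangle _ _ _
        _ ≤ αbar * D (φ m) + dist (x (φ m)) xstar := by rw [h1]; linarith
    · have h2 : Tendsto (fun m => dist (x (φ m)) xstar) atTop (𝓝 0) := by
        rw [← tendsto_iff_dist_tendsto_zero] at *
        exact hxφ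
      have h3 := (hDtend.comp hφtop).const_mul αbar
      rw [mul_zero] at h3
      simpa using h3.add h2
  have hgradφ : Tendsto (fun m => gradient f (y (φ m))) atTop (𝓝 (gradient f xstar)) := by
    rw [tendsto_iff_dist_tendsto_zero]
    apply squeeze_zero (fun m => dist_nonneg) (g := fun m => Lf * dist (y (φ m)) xstar)
    · intro m
      rw [dist_eq_norm, dist_eq_norm]
      exact H.hlip _ _
    · have h2 : Tendsto (fun m => dist (y (φ m)) xstar) atTop (𝓝 0) := by
        rw [← tendsto_iff_dist_tendsto_zero] at *
        exact hyφ
      have := h2.const_mul Lf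
      rwa [mul_zero] at this
  -- coordinate convergence
  have hcoord : ∀ (v : ℕ → Vec n) (w : Vec n), Tendsto v atTop (𝓝 w) →
      Tendsto (fun m => v m i) atTop (𝓝 (w i)) := by
    intro v w h
    exact ((PiLp.continuous_apply 2 _ i).tendsto w).comp h
  -- ε tends to zero
  have hεbound : ∀ k, ε k i ≤ μ ^ k * ε 0 i := by
    intro k
    induction k with
    | zero => simp
    | succ m ih =>
        calc ε (m + 1) i ≤ μ * ε m i := H.hεdec m i
          _ ≤ μ * (μ ^ m * ε 0 i) := by nlinarith [H.hμ0, ih]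
          _ = μ ^ (m + 1) * ε 0 i := by ring
  have hεφ : Tendsto (fun m => ε (φ m) i) atTop (𝓝 0) := by
    apply squeeze_zero (fun m => (εpos H (φ m) i).le) (fun m => hεbound (φ m))
    have h1 : Tendsto (fun k : ℕ => μ ^ k * ε 0 i) atTop (𝓝 0) := by
      have := (tendsto_pow_atTop_nhds_zero_of_lt_one H.hμ0.le H.hμ1).mul_const (ε 0 i)
      rwa [zero_mul] at this
    exact h1.comp hφtop
  -- weight convergence
  have hbase : Tendsto (fun m => |x (φ m) i| + ε (φ m) i) atTop (𝓝 |xstar i|) := by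
    have h1 := (hcoord _ _ hxφ).abs
    have := h1.add hεφ
    rwa [add_zero] at this
  have hwφ : Tendsto (fun m => p * (|x (φ m) i| + ε (φ m) i) ^ (p - 1)) atTop
      (𝓝 (p * |xstar i| ^ (p - 1))) := by
    have hcont : ContinuousAt (fun s : ℝ => s ^ (p - 1)) |xstar i| :=
      Real.continuousAt_rpow_const _ _ (Or.inl (abs_ne_zero.2 hxi))
    exact (hcont.tendsto.comp hbase).const_mul p
  -- sign stabilization
  have hx1i := hcoord _ _ hx1φ
  have hsign : ∀ᶠ m in atTop, x (φ m + 1) i ≠ 0 ∧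
      Real.sign (x (φ m + 1) i) = Real.sign (xstar i) := by
    rcases lt_or_gt_of_ne hxi with hneg | hpos
    · have : ∀ᶠ m in atTop, x (φ m + 1) i < 0 := hx1i.eventually_lt_const hneg
      filter_upwards [this] with m hm
      exact ⟨hm.ne, by rw [Real.sign_of_neg hm, Real.sign_of_neg hneg]⟩
    · have : ∀ᶠ m in atTop, 0 < x (φ m + 1) i := hx1i.eventually_const_lt hpos
      filter_upwards [this] with m hm
      exact ⟨hm.ne', by rw [Real.sign_of_pos hm, Real.sign_of_pos hpos]⟩
  -- the eventually-zero expression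
  have hkkt : ∀ᶠ m in atTop,
      gradient f (y (φ m)) i + β * (x (φ m + 1) i - y (φ m) i)
        + lam * (p * (|x (φ m) i| + ε (φ m) i) ^ (p - 1)) * Real.sign (xstar i) = 0 := by
    filter_upwards [hsign] with m hm
    obtain ⟨h1, h2⟩ := hm
    have := EIRL1Aux.kkt_coord hβ0 (EIRL1Aux.hmin' H (φ m)) i h1
    rw [h2] at this
    exact this
  -- the limit of the expression
  have hlim : Tendsto (fun m =>
      gradient f (y (φ m)) i + β * (x (φ m + 1) i - y (φ m) i)
        + lam * (p * (|x (φ m) i| + ε (φ m) i) ^ (p - 1)) * Real.sign (xstar i)) atTop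
      (𝓝 (gradient f xstar i + β * (xstar i - xstar i)
        + lam * (p * |xstar i| ^ (p - 1)) * Real.sign (xstar i))) := by
    have h1 := hcoord _ _ hgradφ
    have h2 := ((hx1i.sub (hcoord _ _ hyφ)).const_mul β)
    have h3 := (hwφ.const_mul lam).mul_const (Real.sign (xstar i))
    exact (h1.add h2).add h3
  have hzero : gradient f xstar i + β * (xstar i - xstar i)
      + lam * (p * |xstar i| ^ (p - 1)) * Real.sign (xstar i) = 0 := by
    have h0 : Tendsto (fun m =>
        gradient f (y (φ m)) i + β * (x (φ m + 1) i - y (φ m) i)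
          + lam * (p * (|x (φ m) i| + ε (φ m) i) ^ (p - 1)) * Real.sign (xstar i)) atTop
        (𝓝 0) := by
      refine Tendsto.congr' ?_ tendsto_const_nhds
      filter_upwards [hkkt] with m hm
      exact hm.symm
    exact tendsto_nhds_unique hlim h0
  linear_combination hzero
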